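/- In the category of pointed types (or pointed sets), coproducts are not van Kampen: there exists a coproduct diagram such that the induced functor from the slice over the coproduct to the product of the slices over the summands is not an equivalence. -/

import Mathlib

open CategoryTheory CategoryTheory.Limits

/-- The one-point pointed type. -/
private def P : Pointed.{0} := ⟨PUnit, PUnit.unit⟩

private theorem hom_from_P_unique {W : Pointed.{0}} (f g : P ⟶ W) : f = g := by
  ext x
  cases x
  exact f.map_point.trans g.map_point.symm

/-- In the category of pointed types, coproducts are not van Kampen: there is a
binary coproduct cocone which is a colimit but not a van Kampen colimit. -/
theorem pointed_coproducts_not_vanKampen :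
    ∃ (X Y : Pointed.{0}) (c : BinaryCofan X Y),
      Nonempty (IsColimit c) ∧ ¬ IsVanKampenColimit c := by
  refine ⟨P, P, BinaryCofan.mk (𝟙 P) (𝟙 P), ⟨?_⟩, ?_⟩
  · exact BinaryCofan.isColimitMk (fun s => s.inl)
      (fun s => Category.id_comp _)
      (fun s => (Category.id_comp _).trans (hom_from_P_unique s.inl s.inr))
      (fun s m h1 _ => by simpa using h1)
  · intro H
    -- the counterexample cocone: Z with both injections the identity
    set Z : Pointed.{0} := ⟨Bool, false⟩ with hZ
    let zmap : Z ⟶ P := ⟨fun _ => PUnit.unit, rfl⟩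
    let F' : Discrete WalkingPair ⥤ Pointed.{0} := pair Z Z
    let c' : Cocone F' := BinaryCofan.mk (𝟙 Z) (𝟙 Z)
    let α : F' ⟶ pair P P := mapPair zmap zmap
    have hcomm : α ≫ (BinaryCofan.mk (𝟙 P) (𝟙 P)).ι
        = c'.ι ≫ (Functor.const _).map zmap := by
      ext ⟨⟨⟩⟩ x <;> rfl
    have hα : NatTrans.Equifibered α := NatTrans.equifibered_of_discrete α
    have hpb : ∀ j : Discrete WalkingPair,
        IsPullback (c'.ι.app j) (α.app j) zmap ((BinaryCofan.mk (𝟙 P) (𝟙 P)).ι.app j) := by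
      rintro ⟨⟨⟩⟩ <;>
      · refine IsPullback.of_iso (IsPullback.id_horiz zmap) (Iso.refl _) (Iso.refl _)
          (Iso.refl _) (Iso.refl _) ?_ ?_ ?_ ?_ <;> simp [c', α] <;> rfl
    have hcolim : Nonempty (IsColimit c') := (H c' α zmap hcomm hα).mpr hpb
    obtain ⟨hc⟩ := hcolim
    -- derive a contradiction: Z with identity injections can't be a coproduct
    let g : Z ⟶ Z := 𝟙 Z
    let h : Z ⟶ Z := ⟨fun _ => false, rfl⟩
    let s : BinaryCofan Z Z := BinaryCofan.mk g h
    have hgh : g = h :=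
      (hc.fac s ⟨WalkingPair.left⟩).symm.trans (hc.fac s ⟨WalkingPair.right⟩)
    have : g.toFun true = h.toFun true := congrArg (fun k => Pointed.Hom.toFun k true) hgh
    simp [g, h] at this
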